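/- Let M be a d₁×d₂ standard real Gaussian matrix, i.e. all entries m(a,b), (a,b) ∈ Fin d₁ × Fin d₂, are i.i.d. real Gaussian with mean 0 and variance 1. Then for every k and all index families i : Fin (2k) → Fin d₁ and j : Fin (2k) → Fin d₂, E[ ∏_{ℓ=1}^{2k} m(i_ℓ, j_ℓ) ] = ∑_{σ} ∏_{x=1}^{2k} δ(i_x, i_{σ(x)}) · δ(j_x, j_{σ(x)}), where the sum runs over all fixed-point-free involutions σ of {1,…,2k}. -/

import Mathlib

open MeasureTheory ProbabilityTheory

/-- The law of a `d₁ × d₂` standard real Gaussian matrix: i.i.d. entries, each real Gaussian of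
mean `0` and variance `1`. -/
noncomputable def realGaussianMat (d₁ d₂ : ℕ) : Measure (Fin d₁ × Fin d₂ → ℝ) :=
  Measure.pi fun _ => gaussianReal 0 1

/-- The fixed-point-free involutions of `Fin n`, encoding the pairings of `{1,…,n}`. -/
def fpfInvolutions (n : ℕ) : Finset (Equiv.Perm (Fin n)) :=
  Finset.univ.filter fun σ => σ * σ = 1 ∧ ∀ x, σ x ≠ x

section Aux

open Finset Real Filter


def pairCount (n : ℕ) : ℕ := if Even n then Nat.doubleFactorial (n - 1) else 0

lemma pairCount_zero : pairCount 0 = 1 := by simp [pairCount]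

lemma pairCount_rec (k : ℕ) : (k + 1) * pairCount k = pairCount (k + 2) := by
  rcases Nat.even_or_odd k with hk | hk
  · have h2 : Even (k + 2) := by simpa [Nat.even_add] using hk
    simp only [pairCount, if_pos hk, if_pos h2]
    have : k + 2 - 1 = k + 1 := by omega
    rw [this, Nat.doubleFactorial_add_one]
  · have h1 : ¬ Even k := Nat.not_even_iff_odd.mpr hk
    have h2 : ¬ Even (k + 2) := by simpa [Nat.even_add] using h1
    simp [pairCount, h1, h2]

lemma pairCount_rec' (m : ℕ) (hm : 1 ≤ m) :
    (m - 1) * pairCount (m - 2) = pairCount m := by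
  obtain ⟨k, rfl⟩ : ∃ k, m = k + 1 := ⟨m - 1, by omega⟩
  match k with
  | 0 => simp [pairCount]
  | j + 1 =>
    have h1 : j + 1 + 1 - 1 = j + 1 := by omega
    have h2 : j + 1 + 1 - 2 = j := by omega
    rw [h1, h2, pairCount_rec]

variable {α : Type} [DecidableEq α]

/-- The number of fixed-point-free involutions of `ι` preserving the fibers of `p`. -/
def wickCount {ι : Type} [Fintype ι] [DecidableEq ι] (p : ι → α) : ℕ :=
  (univ.filter fun σ : Equiv.Perm ι =>
    σ * σ = 1 ∧ (∀ x, σ x ≠ x) ∧ ∀ x, p x = p (σ x)).card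

lemma step_bij {ι : Type} [Fintype ι] [DecidableEq ι] (p : ι → α) (x0 y : ι)
    (hxy : y ≠ x0) (hpy : p y = p x0) :
    ((univ.filter fun σ : Equiv.Perm ι =>
        σ * σ = 1 ∧ (∀ x, σ x ≠ x) ∧ ∀ x, p x = p (σ x)).filter
      fun σ => σ x0 = y).card
    = wickCount (fun x : {x : ι // x ≠ x0 ∧ x ≠ y} => p x.1) := by
  classical
  rw [wickCount]
  have hsw : ∀ x : ι, ¬(x ≠ x0 ∧ x ≠ y) ↔
      ¬(Equiv.swap x0 y x ≠ x0 ∧ Equiv.swap x0 y x ≠ y) := by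
    intro x
    by_cases hx : x = x0
    · subst hx; simp [Equiv.swap_apply_left, hxy.symm]
    · by_cases hx' : x = y
      · subst hx'; simp [Equiv.swap_apply_right, hxy]
      · rw [Equiv.swap_apply_of_ne_of_ne hx hx']
  set τswap : Equiv.Perm {x : ι // ¬(x ≠ x0 ∧ x ≠ y)} :=
    (Equiv.swap x0 y).subtypePerm (fun x => (hsw x).symm) with hτ
  set I : Equiv.Perm ι → Equiv.Perm {x : ι // x ≠ x0 ∧ x ≠ y} := fun σ =>
    if h : ∀ x : ι, (x ≠ x0 ∧ x ≠ y) ↔ (σ x ≠ x0 ∧ σ x ≠ y) then σ.subtypePerm (fun x => (h x).symm) else 1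
    with hI
  set J : Equiv.Perm {x : ι // x ≠ x0 ∧ x ≠ y} → Equiv.Perm ι := fun σ' =>
    Equiv.Perm.subtypeCongr σ' τswap with hJ
  -- facts about members of the source
  have hsrc : ∀ σ : Equiv.Perm ι,
      σ ∈ ((univ.filter fun σ : Equiv.Perm ι =>
        σ * σ = 1 ∧ (∀ x, σ x ≠ x) ∧ ∀ x, p x = p (σ x)).filter fun σ => σ x0 = y) →
      (∀ z, σ (σ z) = z) ∧ (∀ x, σ x ≠ x) ∧ (∀ x, p x = p (σ x)) ∧ σ x0 = y ∧ σ y = x0 := by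
    intro σ hσ
    have hmem := Finset.mem_filter.mp hσ
    have hc := (Finset.mem_filter.mp hmem.1).2
    have hinv : ∀ z, σ (σ z) = z := fun z => by
      have := Equiv.ext_iff.mp hc.1 z
      simpa [Equiv.Perm.mul_apply] using this
    exact ⟨hinv, hc.2.1, hc.2.2, hmem.2, by rw [← hmem.2, hinv]⟩
  have hpred : ∀ σ : Equiv.Perm ι, (∀ z, σ (σ z) = z) → σ x0 = y → σ y = x0 →
      ∀ x : ι, (x ≠ x0 ∧ x ≠ y) ↔ (σ x ≠ x0 ∧ σ x ≠ y) := by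
    intro σ hinv hσx0 hσy x
    constructor
    · rintro ⟨hx1, hx2⟩
      exact ⟨fun h => hx2 (σ.injective (h.trans hσy.symm)),
        fun h => hx1 (σ.injective (h.trans hσx0.symm))⟩
    · rintro ⟨hx1, hx2⟩
      exact ⟨fun h => hx2 (h ▸ hσx0), fun h => hx1 (h ▸ hσy)⟩
  -- facts about J
  have happ : ∀ (σ' : Equiv.Perm {x : ι // x ≠ x0 ∧ x ≠ y}) (x : ι)
      (hx : ¬(x ≠ x0 ∧ x ≠ y)), J σ' x = Equiv.swap x0 y x := by
    intro σ' x hx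
    rw [hJ]
    simp only []
    rw [Equiv.Perm.subtypeCongr.right_apply (p := fun z : ι => z ≠ x0 ∧ z ≠ y) _ _ hx, hτ]
    simp [Equiv.Perm.subtypePerm_apply]
  have happl : ∀ (σ' : Equiv.Perm {x : ι // x ≠ x0 ∧ x ≠ y}) (x : ι)
      (hx : x ≠ x0 ∧ x ≠ y), J σ' x = (σ' ⟨x, hx⟩).1 :=
    fun σ' x hx => Equiv.Perm.subtypeCongr.left_apply (p := fun z : ι => z ≠ x0 ∧ z ≠ y) _ _ hx
  have hnx0 : ¬(x0 ≠ x0 ∧ x0 ≠ y) := by simp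
  have hny : ¬(y ≠ x0 ∧ y ≠ y) := by simp
  apply Finset.card_nbij' I J
  · -- I maps source to target
    intro σ hσ
    obtain ⟨hinv, hfpf, hpres, hσx0, hσy⟩ := hsrc σ hσ
    have h := hpred σ hinv hσx0 hσy
    rw [hI]; simp only [dif_pos h]
    refine Finset.mem_filter.mpr ⟨Finset.mem_univ _, ?_, ?_, ?_⟩
    · ext x
      simp [Equiv.Perm.mul_apply, Equiv.Perm.subtypePerm_apply, hinv]
    · intro x hcontra
      apply hfpf x.1
      simpa [Equiv.Perm.subtypePerm_apply, Subtype.ext_iff] using hcontra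
    · intro x
      exact hpres x.1
  · -- J maps target to source
    intro σ' hσ'
    have hc := (Finset.mem_filter.mp hσ').2
    have hinv' : ∀ z, σ' (σ' z) = z := fun z => by
      have := Equiv.ext_iff.mp hc.1 z
      simpa [Equiv.Perm.mul_apply] using this
    have hx0app : J σ' x0 = y := by rw [happ σ' x0 hnx0, Equiv.swap_apply_left]
    refine Finset.mem_filter.mpr ⟨Finset.mem_filter.mpr ⟨Finset.mem_univ _, ?_, ?_, ?_⟩, hx0app⟩
    · ext x
      rw [Equiv.Perm.mul_apply, Equiv.Perm.one_apply]
      by_cases hx : x ≠ x0 ∧ x ≠ y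
      · rw [happl σ' x hx, happl σ' _ (σ' ⟨x, hx⟩).2]
        have := hinv' ⟨x, hx⟩
        exact congrArg Subtype.val this
      · rw [happ σ' x hx, happ σ' _ ((hsw x).mp hx), Equiv.swap_apply_self]
    · intro x
      by_cases hx : x ≠ x0 ∧ x ≠ y
      · rw [happl σ' x hx]
        intro h
        exact hc.2.1 ⟨x, hx⟩ (Subtype.ext h)
      · rw [happ σ' x hx]
        rcases not_and_or.mp hx with h | h
        · rw [not_ne_iff.mp h, Equiv.swap_apply_left]
          exact hxy
        · rw [not_ne_iff.mp h, Equiv.swap_apply_right]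
          exact fun hh => hxy hh.symm
    · intro x
      by_cases hx : x ≠ x0 ∧ x ≠ y
      · rw [happl σ' x hx]; exact hc.2.2 ⟨x, hx⟩
      · rw [happ σ' x hx]
        rcases not_and_or.mp hx with h | h
        · rw [not_ne_iff.mp h, Equiv.swap_apply_left]; exact hpy.symm
        · rw [not_ne_iff.mp h, Equiv.swap_apply_right]; exact hpy
  · -- left inverse
    intro σ hσ
    obtain ⟨hinv, hfpf, hpres, hσx0, hσy⟩ := hsrc σ hσ
    have h := hpred σ hinv hσx0 hσy
    rw [hI]; simp only [dif_pos h]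
    ext x
    by_cases hx : x ≠ x0 ∧ x ≠ y
    · rw [happl _ x hx]
      simp [Equiv.Perm.subtypePerm_apply]
    · rw [happ _ x hx]
      rcases not_and_or.mp hx with h' | h'
      · rw [not_ne_iff.mp h', Equiv.swap_apply_left, hσx0]
      · rw [not_ne_iff.mp h', Equiv.swap_apply_right, hσy]
  · -- right inverse
    intro σ' hσ'
    have hc := (Finset.mem_filter.mp hσ').2
    have hinv' : ∀ z, σ' (σ' z) = z := fun z => by
      have := Equiv.ext_iff.mp hc.1 z
      simpa [Equiv.Perm.mul_apply] using this
    have hcond : ∀ x : ι, (x ≠ x0 ∧ x ≠ y) ↔ (J σ' x ≠ x0 ∧ J σ' x ≠ y) := by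
      apply hpred
      · intro z
        by_cases hz : z ≠ x0 ∧ z ≠ y
        · rw [happl σ' z hz, happl σ' _ (σ' ⟨z, hz⟩).2]
          exact congrArg Subtype.val (hinv' ⟨z, hz⟩)
        · rw [happ σ' z hz, happ σ' _ ((hsw z).mp hz), Equiv.swap_apply_self]
      · rw [happ σ' x0 hnx0, Equiv.swap_apply_left]
      · rw [happ σ' y hny, Equiv.swap_apply_right]
    rw [hI]; simp only [dif_pos hcond]
    ext x
    simp only [Equiv.Perm.subtypePerm_apply]
    exact happl σ' x.1 x.2

theorem wickCount_aux [Fintype α] (n : ℕ) :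
    ∀ (ι : Type) [Fintype ι] [DecidableEq ι], Fintype.card ι = n → ∀ p : ι → α,
    wickCount p = ∏ q : α, pairCount ((univ.filter fun x => p x = q).card) := by
  induction n using Nat.strong_induction_on with
  | _ n IH =>
  intro ι _ _ hcard p
  rcases isEmpty_or_nonempty ι with hι | hι
  · have h1 : (univ.filter fun σ : Equiv.Perm ι =>
        σ * σ = 1 ∧ (∀ x, σ x ≠ x) ∧ ∀ x, p x = p (σ x)) = univ := by
      apply filter_true_of_mem
      intro σ _
      refine ⟨?_, fun x => (IsEmpty.false x).elim, fun x => (IsEmpty.false x).elim⟩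
      ext x
      exact (IsEmpty.false x).elim
    have h2 : ∀ q : α, (univ.filter fun x : ι => p x = q) = ∅ := by
      intro q
      simp [Finset.univ_eq_empty]
    rw [wickCount, h1, card_univ, Fintype.card_perm, Fintype.card_eq_zero]
    simp [h2, pairCount_zero]
  · obtain ⟨x0⟩ := hι
    set F : Finset ι := univ.filter fun x => p x = p x0 with hF
    have hx0F : x0 ∈ F := by simp [hF]
    set m : ℕ := F.card with hm
    have hm1 : 1 ≤ m := Finset.card_pos.mpr ⟨x0, hx0F⟩
    -- fiberwise decomposition of the count over the image of `x0`
    rw [wickCount, Finset.card_eq_sum_card_fiberwise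
      (f := fun σ : Equiv.Perm ι => σ x0) (t := univ) (fun σ _ => mem_univ _)]
    -- terms outside `F.erase x0` vanish
    rw [← Finset.sum_subset (Finset.subset_univ (F.erase x0)) ?vanish]
    case vanish =>
      intro y _ hy
      rw [Finset.card_eq_zero, Finset.filter_eq_empty_iff]
      intro σ hσ
      have hc := (Finset.mem_filter.mp hσ).2
      intro hσx0
      apply hy
      rw [Finset.mem_erase]
      refine ⟨fun hyx => hc.2.1 x0 (hσx0.trans hyx), ?_⟩
      rw [hF, Finset.mem_filter]
      exact ⟨mem_univ _, by rw [← hσx0]; exact (hc.2.2 x0).symm⟩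
    -- each term equals a fixed product, via the bijection and the inductive hypothesis
    have hterm : ∀ y ∈ F.erase x0,
        ((univ.filter fun σ : Equiv.Perm ι =>
          σ * σ = 1 ∧ (∀ x, σ x ≠ x) ∧ ∀ x, p x = p (σ x)).filter fun σ => σ x0 = y).card
        = pairCount (m - 2) * ∏ q ∈ univ.erase (p x0),
            pairCount ((univ.filter fun x : ι => p x = q).card) := by
      intro y hy
      have hyx0 : y ≠ x0 := (Finset.mem_erase.mp hy).1
      have hpy : p y = p x0 := (Finset.mem_filter.mp (Finset.mem_erase.mp hy).2).2
      rw [step_bij p x0 y hyx0 hpy]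
      have hlt : Fintype.card {x : ι // x ≠ x0 ∧ x ≠ y} < n := by
        rw [← hcard]
        exact Fintype.card_subtype_lt (p := fun x : ι => x ≠ x0 ∧ x ≠ y) (x := x0) (by simp)
      rw [IH _ hlt _ rfl]
      -- compare fibers
      have fib0 : ∀ q : α, ((univ : Finset {x : ι // x ≠ x0 ∧ x ≠ y}).filter
          fun x => p x.1 = q).card
          = ((univ : Finset ι).filter fun x => (x ≠ x0 ∧ x ≠ y) ∧ p x = q).card := by
        intro q
        apply Finset.card_nbij (i := fun x => x.1)
        · intro a ha
          simp only [Finset.coe_filter, Finset.mem_filter, Finset.mem_univ, true_and, Set.mem_setOf_eq] at ha ⊢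
          exact ⟨a.2, ha⟩
        · intro a _ b _ hab
          exact Subtype.ext hab
        · intro x hx
          simp only [Finset.coe_filter, Finset.mem_univ, true_and, Set.mem_setOf_eq] at hx
          exact ⟨⟨x, hx.1⟩, by simp [hx.2], rfl⟩
      have fib_ne : ∀ q ∈ univ.erase (p x0),
          ((univ : Finset ι).filter fun x => (x ≠ x0 ∧ x ≠ y) ∧ p x = q).card
          = ((univ : Finset ι).filter fun x => p x = q).card := by
        intro q hq
        have hq' : q ≠ p x0 := (Finset.mem_erase.mp hq).1
        congr 1
        apply Finset.filter_congr
        intro x _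
        constructor
        · exact fun h => h.2
        · intro h
          refine ⟨⟨?_, ?_⟩, h⟩
          · rintro rfl; exact hq' h.symm
          · rintro rfl; exact hq' (h.symm.trans hpy)
      have fib_eq : ((univ : Finset ι).filter fun x => (x ≠ x0 ∧ x ≠ y) ∧ p x = p x0).card
          = m - 2 := by
        have : ((univ : Finset ι).filter fun x => (x ≠ x0 ∧ x ≠ y) ∧ p x = p x0)
            = (F.erase x0).erase y := by
          ext x
          simp only [Finset.mem_filter, Finset.mem_univ, true_and, Finset.mem_erase, hF]
          tauto
        rw [this, Finset.card_erase_of_mem (Finset.mem_erase.mpr ⟨hyx0, (Finset.mem_erase.mp hy).2⟩),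
          Finset.card_erase_of_mem hx0F, ← hm]
        omega
      rw [← Finset.mul_prod_erase (h := Finset.mem_univ (p x0))]
      rw [fib0, fib_eq]
      congr 1
      apply Finset.prod_congr rfl
      intro q hq
      rw [fib0, fib_ne q hq]
    rw [Finset.sum_congr rfl hterm, Finset.sum_const, Finset.card_erase_of_mem hx0F, ← hm,
      smul_eq_mul, ← mul_assoc, pairCount_rec' m hm1,
      ← Finset.mul_prod_erase (h := Finset.mem_univ (p x0)), ← hF, ← hm]


lemma integrable_pow_gauss (n : ℕ) :
    Integrable (fun x : ℝ => x ^ n * Real.exp (-(1/2 : ℝ) * x ^ 2)) := by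
  have h := integrable_rpow_mul_exp_neg_mul_sq (b := (1/2:ℝ)) one_half_pos
    (s := (n:ℝ)) (lt_of_lt_of_le neg_one_lt_zero (Nat.cast_nonneg n))
  simpa [Real.rpow_natCast] using h

lemma tendsto_pow_gauss_atTop (n : ℕ) :
    Tendsto (fun x : ℝ => x ^ n * Real.exp (-(1/2:ℝ) * x ^ 2)) atTop (nhds 0) := by
  have h := (rpow_mul_exp_neg_mul_sq_isLittleO_exp_neg one_half_pos (n:ℝ)).tendsto_zero_of_tendsto
    (Real.tendsto_exp_atBot.comp <| tendsto_id.const_mul_atTop_of_neg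
      (neg_lt_zero.mpr one_half_pos))
  simpa [Real.rpow_natCast] using h

lemma gauss_rec (n : ℕ) :
    ∫ x : ℝ, x ^ (n+2) * Real.exp (-(1/2:ℝ) * x ^ 2)
      = ((n:ℝ)+1) * ∫ x : ℝ, x ^ n * Real.exp (-(1/2:ℝ) * x ^ 2) := by
  set E : ℝ → ℝ := fun x => Real.exp (-(1/2:ℝ) * x ^ 2) with hE
  set g : ℝ → ℝ := fun x => x ^ (n+1) * E x with hg
  set f' : ℝ → ℝ := fun x => ((n:ℝ)+1) * (x ^ n * E x) - x ^ (n+2) * E x with hf'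
  have hd : ∀ x : ℝ, HasDerivAt g (f' x) x := by
    intro x
    have h1 : HasDerivAt (fun x : ℝ => x ^ (n+1)) (((n:ℝ)+1) * x ^ n) x := by
      simpa using hasDerivAt_pow (n+1) x
    have h2 : HasDerivAt E (Real.exp (-(1/2:ℝ) * x ^ 2) * (-(1/2:ℝ) * (2 * x))) x := by
      have := (((hasDerivAt_pow 2 x).const_mul (-(1/2:ℝ)))).exp
      simpa [hE] using this
    have := h1.fun_mul h2
    refine this.congr_deriv ?_
    simp only [hf', hE]
    ring
  have hint : ∀ m : ℕ, Integrable (fun x : ℝ => x ^ m * E x) := integrable_pow_gauss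
  have hf'int : Integrable f' := ((hint n).const_mul _).sub (hint (n+2))
  have htop : Tendsto g atTop (nhds 0) := tendsto_pow_gauss_atTop (n+1)
  have hbot : Tendsto g atBot (nhds 0) := by
    have hneg : Tendsto (fun x : ℝ => g (-x)) atTop (nhds 0) := by
      have heq : (fun x : ℝ => g (-x)) = fun x => (-1 : ℝ) ^ (n+1) * (x ^ (n+1) * E x) := by
        funext x
        simp only [hg, hE, neg_sq]
        ring
      rw [heq]
      have h0 := (tendsto_pow_gauss_atTop (n+1)).const_mul ((-1:ℝ)^(n+1))
      rw [mul_zero] at h0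
      exact h0
    have h1 : Tendsto (fun x : ℝ => g (-(-x))) atBot (nhds 0) :=
      hneg.comp tendsto_neg_atBot_atTop
    simpa only [neg_neg] using h1
  have hIoi : ∫ x in Set.Ioi (0:ℝ), f' x = 0 - g 0 :=
    integral_Ioi_of_hasDerivAt_of_tendsto' (fun x _ => hd x) hf'int.integrableOn htop
  have hIic : ∫ x in Set.Iic (0:ℝ), f' x = g 0 - 0 :=
    integral_Iic_of_hasDerivAt_of_tendsto' (fun x _ => hd x) hf'int.integrableOn hbot
  have hzero : ∫ x : ℝ, f' x = 0 := by
    rw [← intervalIntegral.integral_Iic_add_Ioi (b := (0:ℝ)) hf'int.integrableOn hf'int.integrableOn,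
      hIoi, hIic]
    ring
  rw [hf'] at hzero
  rw [integral_sub ((hint n).const_mul _) (hint (n+2)), integral_const_mul] at hzero
  linarith

lemma gauss_odd (n : ℕ) (hn : ¬ Even n) :
    ∫ x : ℝ, x ^ n * Real.exp (-(1/2:ℝ) * x ^ 2) = 0 := by
  have hodd : Odd n := Nat.not_even_iff_odd.mp hn
  have h := integral_neg_eq_self (fun x : ℝ => x ^ n * Real.exp (-(1/2:ℝ) * x ^ 2))
    (volume : Measure ℝ)
  have heq : (fun x : ℝ => (-x) ^ n * Real.exp (-(1/2:ℝ) * (-x) ^ 2))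
      = fun x : ℝ => -(x ^ n * Real.exp (-(1/2:ℝ) * x ^ 2)) := by
    funext x
    rw [hodd.neg_pow, neg_sq]
    ring
  rw [heq, integral_neg] at h
  linarith

lemma gauss_moment_volume (n : ℕ) :
    ∫ x : ℝ, x ^ n * Real.exp (-(1/2:ℝ) * x ^ 2)
      = (pairCount n : ℝ) * Real.sqrt (2 * Real.pi) := by
  induction n using Nat.strong_induction_on with
  | _ n IH =>
  match n with
  | 0 =>
    simp only [pow_zero, one_mul, pairCount, if_pos (Even.zero), Nat.zero_sub,
      Nat.doubleFactorial, Nat.cast_one]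
    rw [integral_gaussian (1/2)]
    norm_num
    rw [mul_comm]
  | 1 =>
    rw [gauss_odd 1 (by simp)]
    simp [pairCount]
  | (m+2) =>
    rw [gauss_rec m, IH m (by omega)]
    have : ((m:ℝ)+1) * ((pairCount m : ℝ) * Real.sqrt (2*Real.pi))
        = (((m+1) * pairCount m : ℕ) : ℝ) * Real.sqrt (2*Real.pi) := by
      push_cast
      ring
    rw [this, pairCount_rec]

lemma integral_pow_gaussianReal (n : ℕ) :
    ∫ x, x ^ n ∂(gaussianReal 0 1) = (pairCount n : ℝ) := by
  rw [gaussianReal_of_var_ne_zero 0 one_ne_zero]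
  have hmeas : Measurable fun x : ℝ => Real.toNNReal (gaussianPDFReal 0 1 x) :=
    (measurable_gaussianPDFReal 0 1).real_toNNReal
  have hdens : gaussianPDF 0 1
      = fun x => ((Real.toNNReal (gaussianPDFReal 0 1 x) : NNReal) : ENNReal) := rfl
  rw [hdens, integral_withDensity_eq_integral_smul hmeas (fun x => x ^ n)]
  have hfun : ∀ x : ℝ, Real.toNNReal (gaussianPDFReal 0 1 x) • x ^ n
      = (Real.sqrt (2 * Real.pi))⁻¹ * (x ^ n * Real.exp (-(1/2:ℝ) * x ^ 2)) := by
    intro x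
    rw [NNReal.smul_def, Real.coe_toNNReal _ (gaussianPDFReal_nonneg 0 1 x), gaussianPDFReal]
    push_cast
    rw [mul_one]
    rw [show -(x - 0)^2/(2*(1:ℝ)) = -(1/2:ℝ) * x ^ 2 by ring, smul_eq_mul]
    ring
  rw [show (fun x : ℝ => Real.toNNReal (gaussianPDFReal 0 1 x) • x ^ n)
      = fun x : ℝ => (Real.sqrt (2 * Real.pi))⁻¹ * (x ^ n * Real.exp (-(1/2:ℝ) * x ^ 2))
    from funext hfun]
  rw [integral_const_mul, gauss_moment_volume n]
  have hs : Real.sqrt (2 * Real.pi) ≠ 0 :=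
    ne_of_gt (Real.sqrt_pos.mpr (by positivity))
  field_simp

lemma integral_pi_prod {ι : Type*} [Fintype ι] {E : Type*} [MeasurableSpace E]
    (μ : Measure E) [SigmaFinite μ] (f : ι → E → ℝ) :
    ∫ x : ι → E, ∏ i, f i (x i) ∂(Measure.pi fun _ => μ) = ∏ i, ∫ x, f i x ∂μ := by
  letI : MeasureSpace E := ⟨μ⟩
  haveI : SigmaFinite (volume : Measure E) := ‹SigmaFinite μ›
  exact MeasureTheory.integral_fintype_prod_eq_prod f

end Aux

open Finset in
/-- Wick formula for a standard real Gaussian matrix: the `2k`-th moments are sums over pairings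
(fixed-point-free involutions) of products of Kronecker deltas on row and column indices. -/
theorem real_gaussian_matrix_moment {d₁ d₂ k : ℕ}
    (i : Fin (2 * k) → Fin d₁) (j : Fin (2 * k) → Fin d₂) :
    ∫ ω : Fin d₁ × Fin d₂ → ℝ, ∏ ℓ, ω (i ℓ, j ℓ) ∂(realGaussianMat d₁ d₂)
      = ∑ σ ∈ fpfInvolutions (2 * k), ∏ x,
          (if i x = i (σ x) then (1 : ℝ) else 0) * (if j x = j (σ x) then (1 : ℝ) else 0) := by
  classical
  set p : Fin (2 * k) → Fin d₁ × Fin d₂ := fun ℓ => (i ℓ, j ℓ) with hp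
  have hRHS : (∑ σ ∈ fpfInvolutions (2 * k), ∏ x,
      (if i x = i (σ x) then (1 : ℝ) else 0) * (if j x = j (σ x) then (1 : ℝ) else 0))
      = (wickCount p : ℝ) := by
    have hterm : ∀ σ : Equiv.Perm (Fin (2 * k)),
        (∏ x, (if i x = i (σ x) then (1 : ℝ) else 0) * (if j x = j (σ x) then (1 : ℝ) else 0))
        = if (∀ x, p x = p (σ x)) then (1 : ℝ) else 0 := by
      intro σ
      have hx : ∀ x, (if i x = i (σ x) then (1 : ℝ) else 0) * (if j x = j (σ x) then (1 : ℝ) else 0)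
          = if p x = p (σ x) then (1 : ℝ) else 0 := by
        intro x
        by_cases h1 : i x = i (σ x) <;> by_cases h2 : j x = j (σ x) <;>
          simp [hp, Prod.ext_iff, h1, h2]
      rw [Finset.prod_congr rfl (fun x _ => hx x), Finset.prod_boole]
      simp
    rw [Finset.sum_congr rfl (fun σ _ => hterm σ), Finset.sum_boole]
    congr 1
    rw [wickCount, fpfInvolutions, Finset.filter_filter]
    congr 1
    ext σ
    simp only [Finset.mem_filter]
    tauto
  have hLHS : ∫ ω : Fin d₁ × Fin d₂ → ℝ, ∏ ℓ, ω (i ℓ, j ℓ) ∂(realGaussianMat d₁ d₂)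
      = ∏ q : Fin d₁ × Fin d₂,
          (pairCount ((univ.filter fun x => p x = q).card) : ℝ) := by
    have hprod : ∀ ω : Fin d₁ × Fin d₂ → ℝ, ∏ ℓ, ω (i ℓ, j ℓ)
        = ∏ q : Fin d₁ × Fin d₂, ω q ^ ((univ.filter fun x => p x = q).card) := by
      intro ω
      rw [← Finset.prod_fiberwise univ p (fun ℓ => ω (p ℓ))]
      apply Finset.prod_congr rfl
      intro q _
      rw [Finset.prod_congr rfl (fun x hx => by rw [(Finset.mem_filter.mp hx).2]),
        Finset.prod_const]
    rw [realGaussianMat,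
      show (fun ω : Fin d₁ × Fin d₂ → ℝ => ∏ ℓ, ω (i ℓ, j ℓ))
        = fun ω => ∏ q : Fin d₁ × Fin d₂, ω q ^ ((univ.filter fun x => p x = q).card)
      from funext hprod]
    rw [integral_pi_prod (μ := gaussianReal 0 1)
      (f := fun q x => x ^ ((univ.filter fun x => p x = q).card))]
    exact Finset.prod_congr rfl fun q _ => integral_pow_gaussianReal _
  rw [hLHS, hRHS,
    wickCount_aux (Fintype.card (Fin (2 * k))) (Fin (2 * k)) rfl p]
  push_cast
  rfl
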